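/- For every x ∈ (0,1), the inequality (1-x)·e^{-1} < (1-x)^{1/x} holds. -/

import Mathlib

/-- For `x ∈ (0,1)`, `(1-x) e⁻¹ < (1-x)^(1/x)`. -/
theorem stmt_6 :
    ∀ x ∈ Set.Ioo (0:ℝ) 1,
      (1 - x) * Real.exp (-1) < Real.exp (Real.log (1 - x) / x) := by
  rintro x ⟨hx0, hx1⟩
  have h1 : (0:ℝ) < 1 - x := by linarith
  have hrw : (1 - x) * Real.exp (-1) = Real.exp (Real.log (1 - x) + (-1)) := by
    rw [Real.exp_add, Real.exp_log h1]
  rw [hrw, Real.exp_lt_exp]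
  set L := Real.log (1 - x) with hL
  have hinv : (0:ℝ) < (1 - x)⁻¹ := by positivity
  have hne : (1 - x)⁻¹ ≠ 1 := by
    intro h
    have : (1 - x) = 1 := by
      field_simp at h; linarith
    linarith
  have h := Real.log_lt_sub_one_of_pos hinv hne
  rw [Real.log_inv] at h
  have h2 : (-L) * (1 - x) < ((1 - x)⁻¹ - 1) * (1 - x) :=
    mul_lt_mul_of_pos_right h h1
  have h3 : ((1 - x)⁻¹ - 1) * (1 - x) = x := by field_simp; ring
  rw [h3] at h2
  rw [lt_div_iff₀ hx0]
  nlinarith
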